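/- Let p be a prime, n ≥ 1, and let A be a direct sum of copies of ℤ/p^n (over an arbitrary index set Ω). Then the Jacobson radical of End(A) equals p·End(A), and J(End A)^n = 0. -/

import Mathlib

open DirectSum

set_option linter.unusedSectionVars false

section Aux

variable (p n : ℕ) (Ω : Type*) [DecidableEq Ω]

local notation "M" => ZMod (p ^ n)
local notation "A" => ⨁ _ : Ω, ZMod (p ^ n)

theorem aux_exp (x : A) : (p ^ n) • x = 0 := by
  rw [← Nat.cast_smul_eq_nsmul (ZMod (p ^ n)), ZMod.natCast_self, zero_smul]

theorem aux_zlin [NeZero (p ^ n)] (f : AddMonoid.End A) (c : M) (x : A) :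
    f (c • x) = c • f x := by
  have h : ∀ y : A, c • y = c.val • y := fun y => by
    rw [← Nat.cast_smul_eq_nsmul (ZMod (p ^ n)), ZMod.natCast_val, ZMod.cast_id]
  rw [h, h, map_nsmul]

theorem aux_expEnd (h : AddMonoid.End A) : (p ^ n) • h = 0 :=
  AddMonoidHom.ext fun x => aux_exp p n Ω (h x)

theorem aux_dvd (hp : p.Prime) (hn : 1 ≤ n) (f : AddMonoid.End A)
    (hf : f ∈ (⊥ : Ideal (AddMonoid.End A)).jacobson) (β α₀ : Ω) :
    p ∣ ((f (DirectSum.of _ β (1 : M))) α₀).val := by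
  have hlt : 1 < p ^ n := Nat.one_lt_pow (by omega) hp.one_lt
  haveI : Fact (1 < p ^ n) := ⟨hlt⟩
  haveI : NeZero (p ^ n) := ⟨by omega⟩
  by_contra hdvd
  set c : M := (f (DirectSum.of _ β (1 : M))) α₀ with hc
  have hcu : IsUnit c := by
    have h1 : Nat.Coprime c.val (p ^ n) := by
      refine Nat.Coprime.pow_right _ ?_
      exact Nat.coprime_comm.mp ((Nat.Prime.coprime_iff_not_dvd hp).mpr hdvd)
    have := (ZMod.isUnit_iff_coprime c.val (p ^ n)).mpr h1
    rwa [ZMod.natCast_val, ZMod.cast_id] at this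
  let e : M →+ A := (LinearMap.toSpanSingleton M A (DirectSum.of _ β (1 : M))).toAddMonoidHom
  let m : M →+ M := AddMonoidHom.mulLeft (-(c⁻¹))
  let π : A →+ M := DFinsupp.evalAddMonoidHom α₀
  let y : AddMonoid.End A := ((e.comp m).comp π : A →+ A)
  obtain ⟨z, hz⟩ := Ideal.mem_jacobson_iff.mp hf y
  rw [Ideal.mem_bot, sub_eq_zero] at hz
  have hinj : ∀ x : A, z ((y * f + 1) x) = x := by
    intro x
    have : (z * (y * f + 1)) x = (1 : AddMonoid.End A) x := by
      rw [mul_add, mul_one, ← mul_assoc, hz]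
    simpa using this
  have key : (y * f + 1) (DirectSum.of _ β (1 : M)) = 0 := by
    show y (f (DirectSum.of _ β (1 : M))) + DirectSum.of _ β (1 : M) = 0
    have : y (f (DirectSum.of _ β (1 : M))) = (-(c⁻¹) * c) • DirectSum.of _ β (1 : M) := rfl
    rw [this, neg_mul, ZMod.inv_mul_of_unit c hcu]
    show (-1 : M) • DirectSum.of (fun _ : Ω => M) β (1 : M) + DirectSum.of (fun _ : Ω => M) β (1 : M) = 0
    exact (congrArg (· + DirectSum.of (fun _ : Ω => M) β (1 : M)) (neg_one_smul M (DirectSum.of (fun _ : Ω => M) β (1 : M)))).trans (neg_add_cancel _)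
  have h2 := hinj (DirectSum.of _ β (1 : M))
  rw [key, map_zero] at h2
  have h1 : (DirectSum.of (fun _ : Ω => M) β (1 : M)) β = (1 : M) := DirectSum.of_eq_same β 1
  rw [← h2] at h1
  simp at h1

-- construction of g with f = p • g
theorem aux_construct (hp : p.Prime) (hn : 1 ≤ n) (f : AddMonoid.End A)
    (hdvd : ∀ β α : Ω, p ∣ ((f (DirectSum.of _ β (1 : M))) α).val) :
    ∃ g : AddMonoid.End A, f = p • g := by
  have hlt : 1 < p ^ n := Nat.one_lt_pow (by omega) hp.one_lt
  haveI : Fact (1 < p ^ n) := ⟨hlt⟩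
  haveI : NeZero (p ^ n) := ⟨by omega⟩
  let φ : M → M := fun c => ((c.val / p : ℕ) : M)
  have hφ0 : φ 0 = 0 := by simp [φ]
  have hφ : ∀ c : M, p ∣ c.val → p • φ c = c := by
    intro c hc
    show p • ((c.val / p : ℕ) : M) = c
    rw [nsmul_eq_mul, ← Nat.cast_mul, Nat.mul_div_cancel' hc, ZMod.natCast_val, ZMod.cast_id]
  -- preimages of the generators' images
  let y : Ω → (⨁ _ : Ω, ZMod (p ^ n)) := fun β =>
    DFinsupp.mapRange (fun _ => φ) (fun _ => hφ0) (f (DirectSum.of _ β (1 : M)))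
  have hy : ∀ β, p • y β = f (DirectSum.of _ β (1 : M)) := by
    intro β
    refine DFinsupp.ext fun α => ?_
    rw [DFinsupp.smul_apply, DFinsupp.mapRange_apply]
    exact hφ _ (hdvd β α)
  let g : AddMonoid.End (⨁ _ : Ω, ZMod (p ^ n)) :=
    DirectSum.toAddMonoid fun β => (LinearMap.toSpanSingleton M _ (y β)).toAddMonoidHom
  refine ⟨g, AddMonoidHom.ext fun x => ?_⟩
  induction x using DirectSum.induction_on with
  | zero => exact (map_zero f).trans (map_zero (p • g)).symm
  | of β m =>
    have hof : DirectSum.of (fun _ : Ω => M) β m = m • DirectSum.of (fun _ : Ω => M) β (1 : M) := by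
      have := (DirectSum.lof M Ω (fun _ : Ω => M) β).map_smul m 1
      simp only [smul_eq_mul, mul_one] at this
      simpa [DirectSum.lof_eq_of] using this
    have hg : g (DirectSum.of (fun _ : Ω => M) β m) = m • y β := by
      show (DirectSum.toAddMonoid fun β => (LinearMap.toSpanSingleton M _ (y β)).toAddMonoidHom) (DirectSum.of (fun _ : Ω => M) β m) = m • y β
      rw [DirectSum.toAddMonoid_of]
      rfl
    show f _ = (p • g) _
    have hpg : (p • g) (DirectSum.of (fun _ : Ω => M) β m) = p • (m • y β) := by
      rw [show (p • g) (DirectSum.of (fun _ : Ω => M) β m) = p • g (DirectSum.of (fun _ : Ω => M) β m) from rfl, hg]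
    rw [hpg, smul_comm, hy, hof, aux_zlin]
  | add a b ha hb =>
    exact (map_add f a b).trans ((congrArg₂ (· + ·) ha hb).trans (map_add (p • g) a b).symm)

theorem aux_mem (hn : 1 ≤ n) (f g : AddMonoid.End A) (hf : f = p • g) :
    f ∈ (⊥ : Ideal (AddMonoid.End A)).jacobson := by
  rw [Ideal.mem_jacobson_iff]
  intro y
  have hnil : IsNilpotent (y * f) := by
    refine ⟨n, ?_⟩
    rw [hf, mul_smul_comm, smul_pow, aux_expEnd]
  have hu : IsUnit (y * f + 1) := hnil.isUnit_add_one
  refine ⟨↑hu.unit⁻¹, ?_⟩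
  rw [Ideal.mem_bot, sub_eq_zero, mul_assoc, ← mul_one ((↑hu.unit⁻¹ : AddMonoid.End A))]
  rw [mul_assoc, one_mul, ← mul_add]
  exact hu.val_inv_mul

theorem aux_list (l : List (AddMonoid.End A))
    (h : ∀ f ∈ l, ∃ g : AddMonoid.End A, f = p • g) :
    ∃ h0 : AddMonoid.End A, l.prod = p ^ l.length • h0 := by
  induction l with
  | nil => exact ⟨1, by simp⟩
  | cons a t ih =>
    obtain ⟨g, hg⟩ := h a (List.mem_cons_self)
    obtain ⟨h0, hh⟩ := ih fun f hf => h f (List.mem_cons_of_mem _ hf)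
    refine ⟨g * h0, ?_⟩
    rw [List.prod_cons, hg, hh, List.length_cons, smul_mul_assoc, mul_smul_comm,
      smul_smul, pow_succ']

end Aux

theorem jacobson_of_homogeneous_eq_p_smul (p n : ℕ) (hp : p.Prime) (hn : 1 ≤ n)
    (Ω : Type*) :
    (∀ f : AddMonoid.End (⨁ _ : Ω, ZMod (p ^ n)),
      f ∈ (⊥ : Ideal (AddMonoid.End (⨁ _ : Ω, ZMod (p ^ n)))).jacobson ↔
        ∃ g : AddMonoid.End (⨁ _ : Ω, ZMod (p ^ n)), f = p • g) ∧
    (∀ l : List (AddMonoid.End (⨁ _ : Ω, ZMod (p ^ n))), l.length = n →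
      (∀ f ∈ l, f ∈ (⊥ : Ideal (AddMonoid.End (⨁ _ : Ω, ZMod (p ^ n)))).jacobson) →
      l.prod = 0) := by
  classical
  have main : ∀ f : AddMonoid.End (⨁ _ : Ω, ZMod (p ^ n)),
      f ∈ (⊥ : Ideal (AddMonoid.End (⨁ _ : Ω, ZMod (p ^ n)))).jacobson ↔
        ∃ g : AddMonoid.End (⨁ _ : Ω, ZMod (p ^ n)), f = p • g := by
    intro f
    constructor
    · intro hf
      exact aux_construct p n Ω hp hn f fun β α => aux_dvd p n Ω hp hn f hf β α
    · rintro ⟨g, hg⟩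
      exact aux_mem p n Ω hn f g hg
  refine ⟨main, fun l hlen hl => ?_⟩
  obtain ⟨h0, hh⟩ := aux_list p n Ω l fun f hf => (main f).mp (hl f hf)
  rw [hh, hlen, aux_expEnd]
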